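/- Let n ≥ 1 and let p be a profile. If a real n×n matrix X has profile p, then the Toda vector field value T(X) = X·π_k(X) − π_k(X)·X has profile p, where π_k(X) = X − π_u(X). -/

import Mathlib

open Matrix

/-- A profile: a set of index pairs `(i,j)` with `j < i`, closed under moving
towards the diagonal. -/
def IsProfile {n : ℕ} (p : Set (Fin n × Fin n)) : Prop :=
  (∀ ij ∈ p, ij.2 < ij.1) ∧
  ∀ ij ∈ p, ∀ i' j' : Fin n, j' < i' → i' ≤ ij.1 → ij.2 ≤ j' → (i', j') ∈ p

/-- `M` has profile `p` if all its strictly lower triangular entries outside `p` vanish. -/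
def HasProfile {n : ℕ} (M : Matrix (Fin n) (Fin n) ℝ) (p : Set (Fin n × Fin n)) : Prop :=
  ∀ i j : Fin n, j < i → (i, j) ∉ p → M i j = 0

/-- The upper triangular part `π_u(M)` of the decomposition of `M` into a
skew-symmetric plus an upper triangular matrix. -/
def piu {n : ℕ} (M : Matrix (Fin n) (Fin n) ℝ) : Matrix (Fin n) (Fin n) ℝ :=
  Matrix.of fun i j => if i < j then M i j + M j i else if i = j then M i j else 0

/-- The skew-symmetric part `π_k(M) = M - π_u(M)`. -/
def pik {n : ℕ} (M : Matrix (Fin n) (Fin n) ℝ) : Matrix (Fin n) (Fin n) ℝ :=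
  M - piu M

lemma pik_apply {n : ℕ} (M : Matrix (Fin n) (Fin n) ℝ) (a b : Fin n) :
    pik M a b = if a < b then -M b a else if a = b then 0 else M a b := by
  simp only [pik, piu, Matrix.sub_apply, Matrix.of_apply]
  rcases lt_trichotomy a b with h | h | h
  · simp [h]
  · simp [h]
  · simp [h.not_gt, (ne_of_gt h)]

theorem stmt_13 (n : ℕ) (hn : 1 ≤ n) (p : Set (Fin n × Fin n)) (hp : IsProfile p)
    (X : Matrix (Fin n) (Fin n) ℝ) (hX : HasProfile X p) :
    HasProfile (X * pik X - pik X * X) p := by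
  intro i j hij hnp
  simp only [Matrix.sub_apply, Matrix.mul_apply, ← Finset.sum_sub_distrib]
  apply Finset.sum_eq_zero
  intro k _
  rcases lt_trichotomy k j with hkj | hkj | hkj
  · -- k < j < i : X i k = 0 and pik X i k = X i k
    have hik : X i k = 0 :=
      hX i k (hkj.trans hij) (fun hm => hnp (hp.2 _ hm i j hij le_rfl hkj.le))
    rw [pik_apply, pik_apply, if_neg (hkj.trans hij).not_gt,
      if_neg (ne_of_gt (hkj.trans hij)), hik]
    ring
  · -- k = j
    subst hkj
    have hXij : X i k = 0 := hX i k hij hnp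
    rw [pik_apply, pik_apply, if_neg (lt_irrefl k), if_pos rfl,
      if_neg hij.not_gt, if_neg (ne_of_gt hij), hXij]
    ring
  · rcases lt_trichotomy k i with hki | hki | hki
    · -- j < k < i
      rw [pik_apply, pik_apply, if_neg hkj.not_gt, if_neg (ne_of_gt hkj),
        if_neg hki.not_gt, if_neg (ne_of_gt hki)]
      ring
    · -- k = i
      subst hki
      have hXij : X k j = 0 := hX k j hij hnp
      rw [pik_apply, pik_apply, if_neg hij.not_gt, if_neg (ne_of_gt hij),
        if_neg (lt_irrefl k), if_pos rfl, hXij]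
      ring
    · -- j < i < k : X k j = 0
      have hkj0 : X k j = 0 :=
        hX k j hkj (fun hm => hnp (hp.2 _ hm i j hij hki.le le_rfl))
      rw [pik_apply, pik_apply, if_neg hkj.not_gt, if_neg (ne_of_gt hkj),
        if_pos hki, hkj0]
      ring
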